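/- arXiv:0811.1108 — 3 statements merged into one kernel-verified Lean document; each statement's English description precedes it below -/
import Mathlib

section
/- The function f(x) = E[log(1+xZ)]/E[Z/(1+xZ)] − x, where Z is standard exponential, is continuous and strictly increasing on [0,∞), satisfies f(0) = 0, and f(x) → +∞ as x → +∞. Hence f admits a continuous strictly increasing inverse f^{−1}: [0,∞) → [0,∞). -/
open MeasureTheory Set Filter

noncomputable def wfA (x : ℝ) : ℝ := ∫ z in Ioi (0:ℝ), Real.log (1 + x * z) * Real.exp (-z)
noncomputable def wfB (x : ℝ) : ℝ := ∫ z in Ioi (0:ℝ), (z / (1 + x * z)) * Real.exp (-z)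
noncomputable def wfB' (x : ℝ) : ℝ :=
  ∫ z in Ioi (0:ℝ), (-(z ^ 2 / (1 + x * z) ^ 2)) * Real.exp (-z)

/-- The water-filling function f(x) = E[log(1+xZ)]/E[Z/(1+xZ)] − x for Z standard exponential. -/
noncomputable def waterfill (x : ℝ) : ℝ :=
  (∫ z in Ioi (0:ℝ), Real.log (1 + x * z) * Real.exp (-z)) /
    (∫ z in Ioi (0:ℝ), (z / (1 + x * z)) * Real.exp (-z)) - x

lemma waterfill_def (x : ℝ) : waterfill x = wfA x / wfB x - x := rfl

lemma integrableOn_id_exp : IntegrableOn (fun z : ℝ => z * Real.exp (-z)) (Ioi 0) := by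
  have h := Real.GammaIntegral_convergent (s := 2) (by norm_num)
  refine h.congr_fun (fun z hz => ?_) measurableSet_Ioi
  norm_num [Real.rpow_one, mul_comm]

lemma integrableOn_sq_exp : IntegrableOn (fun z : ℝ => z ^ 2 * Real.exp (-z)) (Ioi 0) := by
  have h := Real.GammaIntegral_convergent (s := 3) (by norm_num)
  refine h.congr_fun (fun z hz => ?_) measurableSet_Ioi
  have : (3 : ℝ) - 1 = ((2 : ℕ) : ℝ) := by norm_num
  rw [this]; beta_reduce; rw [Real.rpow_natCast, mul_comm]

lemma measA (x : ℝ) : AEStronglyMeasurable (fun z : ℝ => Real.log (1 + x * z) * Real.exp (-z))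
    (volume.restrict (Ioi 0)) := by
  exact ((Real.measurable_log.comp (by fun_prop)).mul (by fun_prop)).aestronglyMeasurable

lemma measB (x : ℝ) : AEStronglyMeasurable (fun z : ℝ => (z / (1 + x * z)) * Real.exp (-z))
    (volume.restrict (Ioi 0)) := by
  exact ((measurable_id.div (by fun_prop)).mul (by fun_prop)).aestronglyMeasurable

lemma measB' (x : ℝ) : AEStronglyMeasurable
    (fun z : ℝ => (-(z ^ 2 / (1 + x * z) ^ 2)) * Real.exp (-z)) (volume.restrict (Ioi 0)) := by
  exact (((measurable_id.pow_const 2).div (by fun_prop)).neg.mul (by fun_prop)).aestronglyMeasurable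

lemma intA' {x : ℝ} (hx : 0 ≤ x) :
    IntegrableOn (fun z : ℝ => Real.log (1 + x * z) * Real.exp (-z)) (Ioi 0) := by
  refine Integrable.mono' (integrableOn_id_exp.const_mul x) (measA x) ?_
  filter_upwards [ae_restrict_mem measurableSet_Ioi] with z hz
  have hz0 : 0 < z := hz
  have h1 : (0:ℝ) < 1 + x * z := by nlinarith
  have hlog0 : 0 ≤ Real.log (1 + x * z) := Real.log_nonneg (by nlinarith)
  have hlog : Real.log (1 + x * z) ≤ x * z := by
    have := Real.log_le_sub_one_of_pos h1
    linarith
  rw [norm_mul, Real.norm_eq_abs, Real.norm_eq_abs, abs_of_nonneg hlog0,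
    abs_of_pos (Real.exp_pos _)]
  calc Real.log (1 + x * z) * Real.exp (-z) ≤ (x * z) * Real.exp (-z) := by
        exact mul_le_mul_of_nonneg_right hlog (Real.exp_pos _).le
    _ = x * (z * Real.exp (-z)) := by ring

lemma intB {x : ℝ} (hx : 0 ≤ x) :
    IntegrableOn (fun z : ℝ => (z / (1 + x * z)) * Real.exp (-z)) (Ioi 0) := by
  refine Integrable.mono' integrableOn_id_exp (measB x) ?_
  filter_upwards [ae_restrict_mem measurableSet_Ioi] with z hz
  have hz0 : 0 < z := hz
  have h1 : (1:ℝ) ≤ 1 + x * z := by nlinarith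
  have hd : 0 ≤ z / (1 + x * z) := div_nonneg hz0.le (by linarith)
  have hdz : z / (1 + x * z) ≤ z := by
    rw [div_le_iff₀ (by linarith)]; nlinarith
  rw [norm_mul, Real.norm_eq_abs, Real.norm_eq_abs, abs_of_nonneg hd,
    abs_of_pos (Real.exp_pos _)]
  exact mul_le_mul_of_nonneg_right hdz (Real.exp_pos _).le

lemma intB' {x : ℝ} (hx : 0 ≤ x) :
    IntegrableOn (fun z : ℝ => (-(z ^ 2 / (1 + x * z) ^ 2)) * Real.exp (-z)) (Ioi 0) := by
  refine Integrable.mono' integrableOn_sq_exp (measB' x) ?_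
  filter_upwards [ae_restrict_mem measurableSet_Ioi] with z hz
  have hz0 : 0 < z := hz
  have h1 : (1:ℝ) ≤ 1 + x * z := by nlinarith
  have h1sq : (1:ℝ) ≤ (1 + x * z) ^ 2 := by nlinarith
  have hd : 0 ≤ z ^ 2 / (1 + x * z) ^ 2 := div_nonneg (by positivity) (by positivity)
  have hdz : z ^ 2 / (1 + x * z) ^ 2 ≤ z ^ 2 := by
    rw [div_le_iff₀ (by positivity)]; nlinarith
  rw [norm_mul, Real.norm_eq_abs, Real.norm_eq_abs, abs_neg, abs_of_nonneg hd,
    abs_of_pos (Real.exp_pos _)]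
  exact mul_le_mul_of_nonneg_right hdz (Real.exp_pos _).le

lemma wfB_pos {x : ℝ} (hx : 0 ≤ x) : 0 < wfB x := by
  rw [wfB, setIntegral_pos_iff_support_of_nonneg_ae]
  · have hsub : Ioi (0:ℝ) ⊆ (Function.support fun z => (z / (1 + x * z)) * Real.exp (-z)) ∩ Ioi 0 := by
      intro z hz
      have hz0 : 0 < z := hz
      refine ⟨?_, hz⟩
      have : 0 < (z / (1 + x * z)) * Real.exp (-z) := by
        apply mul_pos (div_pos hz0 (by nlinarith)) (Real.exp_pos _)
      exact this.ne'
    have h0 : (0:ENNReal) < volume (Ioi (0:ℝ)) := by simp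
    exact h0.trans_le (measure_mono hsub)
  · filter_upwards [ae_restrict_mem measurableSet_Ioi] with z hz
    have hz0 : 0 < z := hz
    positivity
  · exact intB hx

lemma wfA_pos {x : ℝ} (hx : 0 < x) : 0 < wfA x := by
  rw [wfA, setIntegral_pos_iff_support_of_nonneg_ae]
  · have hsub : Ioi (0:ℝ) ⊆ (Function.support fun z => Real.log (1 + x * z) * Real.exp (-z)) ∩ Ioi 0 := by
      intro z hz
      have hz0 : 0 < z := hz
      refine ⟨?_, hz⟩
      have : 0 < Real.log (1 + x * z) * Real.exp (-z) := by
        apply mul_pos (Real.log_pos (by nlinarith)) (Real.exp_pos _)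
      exact this.ne'
    have h0 : (0:ENNReal) < volume (Ioi (0:ℝ)) := by simp
    exact h0.trans_le (measure_mono hsub)
  · filter_upwards [ae_restrict_mem measurableSet_Ioi] with z hz
    have hz0 : 0 < z := hz
    have h1 : (1:ℝ) ≤ 1 + x * z := by nlinarith
    exact mul_nonneg (Real.log_nonneg h1) (Real.exp_pos _).le
  · exact intA' hx.le

lemma wfB'_neg {x : ℝ} (hx : 0 ≤ x) : wfB' x < 0 := by
  rw [wfB']
  have : ∀ z ∈ Ioi (0:ℝ), (-(z ^ 2 / (1 + x * z) ^ 2)) * Real.exp (-z)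
      = -((z ^ 2 / (1 + x * z) ^ 2) * Real.exp (-z)) := fun z _ => by ring
  rw [setIntegral_congr_fun measurableSet_Ioi this, integral_neg, neg_lt_zero]
  rw [setIntegral_pos_iff_support_of_nonneg_ae]
  · have hsub : Ioi (0:ℝ) ⊆ (Function.support fun z => (z ^ 2 / (1 + x * z) ^ 2) * Real.exp (-z)) ∩ Ioi 0 := by
      intro z hz
      have hz0 : 0 < z := hz
      refine ⟨?_, hz⟩
      have : 0 < (z ^ 2 / (1 + x * z) ^ 2) * Real.exp (-z) := by
        have h1 : (0:ℝ) < 1 + x * z := by nlinarith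
        positivity
      exact this.ne'
    have h0 : (0:ENNReal) < volume (Ioi (0:ℝ)) := by simp
    exact h0.trans_le (measure_mono hsub)
  · filter_upwards [ae_restrict_mem measurableSet_Ioi] with z hz
    have hz0 : 0 < z := hz
    have h1 : (0:ℝ) < 1 + x * z := by nlinarith
    positivity
  · have h := intB' hx
    have : ∀ z ∈ Ioi (0:ℝ), (-(z ^ 2 / (1 + x * z) ^ 2)) * Real.exp (-z)
        = -((z ^ 2 / (1 + x * z) ^ 2) * Real.exp (-z)) := fun z _ => by ring
    have h2 := (h.congr_fun this measurableSet_Ioi).neg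
    refine h2.congr (Eventually.of_forall fun z => by simp)

lemma ball_pos {x₀ x : ℝ} (h : 0 < x₀) (hx : x ∈ Metric.ball x₀ x₀) : 0 < x := by
  rw [Metric.mem_ball, Real.dist_eq, abs_sub_lt_iff] at hx
  linarith [hx.2]

lemma hasDerivAt_wfA {x₀ : ℝ} (h : 0 < x₀) : HasDerivAt wfA (wfB x₀) x₀ := by
  have key := hasDerivAt_integral_of_dominated_loc_of_deriv_le
    (μ := volume.restrict (Ioi 0)) (x₀ := x₀) (s := Metric.ball x₀ x₀)
    (F := fun x z => Real.log (1 + x * z) * Real.exp (-z))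
    (F' := fun x z => (z / (1 + x * z)) * Real.exp (-z))
    (bound := fun z => z * Real.exp (-z)) (Metric.ball_mem_nhds x₀ h)
    (Eventually.of_forall fun x => measA x) (intA' h.le) (measB x₀) ?_
    integrableOn_id_exp ?_
  · exact key.2
  · filter_upwards [ae_restrict_mem measurableSet_Ioi] with z hz x hx
    have hz0 : 0 < z := hz
    have hx0 : 0 < x := ball_pos h hx
    have h1 : (1:ℝ) ≤ 1 + x * z := by nlinarith
    have hd : 0 ≤ z / (1 + x * z) := div_nonneg hz0.le (by linarith)
    have hdz : z / (1 + x * z) ≤ z := by rw [div_le_iff₀ (by linarith)]; nlinarith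
    rw [norm_mul, Real.norm_eq_abs, Real.norm_eq_abs, abs_of_nonneg hd,
      abs_of_pos (Real.exp_pos _)]
    exact mul_le_mul_of_nonneg_right hdz (Real.exp_pos _).le
  · filter_upwards [ae_restrict_mem measurableSet_Ioi] with z hz x hx
    have hz0 : 0 < z := hz
    have hx0 : 0 < x := ball_pos h hx
    have h1 : (0:ℝ) < 1 + x * z := by nlinarith
    have hlin : HasDerivAt (fun x : ℝ => 1 + x * z) z x := by
      simpa using ((hasDerivAt_id x).mul_const z).const_add 1
    have hlog : HasDerivAt (fun x : ℝ => Real.log (1 + x * z)) (z / (1 + x * z)) x :=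
      hlin.log h1.ne'
    exact hlog.mul_const _

lemma hasDerivAt_wfB {x₀ : ℝ} (h : 0 < x₀) : HasDerivAt wfB (wfB' x₀) x₀ := by
  have key := hasDerivAt_integral_of_dominated_loc_of_deriv_le
    (μ := volume.restrict (Ioi 0)) (x₀ := x₀) (s := Metric.ball x₀ x₀)
    (F := fun x z => (z / (1 + x * z)) * Real.exp (-z))
    (F' := fun x z => (-(z ^ 2 / (1 + x * z) ^ 2)) * Real.exp (-z))
    (bound := fun z => z ^ 2 * Real.exp (-z)) (Metric.ball_mem_nhds x₀ h)
    (Eventually.of_forall fun x => measB x) (intB h.le) (measB' x₀) ?_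
    integrableOn_sq_exp ?_
  · exact key.2
  · filter_upwards [ae_restrict_mem measurableSet_Ioi] with z hz x hx
    have hz0 : 0 < z := hz
    have hx0 : 0 < x := ball_pos h hx
    have h1 : (1:ℝ) ≤ 1 + x * z := by nlinarith
    have h1sq : (1:ℝ) ≤ (1 + x * z) ^ 2 := by nlinarith
    have hd : 0 ≤ z ^ 2 / (1 + x * z) ^ 2 := by positivity
    have hdz : z ^ 2 / (1 + x * z) ^ 2 ≤ z ^ 2 := by
      rw [div_le_iff₀ (by positivity)]; nlinarith
    rw [norm_mul, Real.norm_eq_abs, Real.norm_eq_abs, abs_neg, abs_of_nonneg hd,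
      abs_of_pos (Real.exp_pos _)]
    exact mul_le_mul_of_nonneg_right hdz (Real.exp_pos _).le
  · filter_upwards [ae_restrict_mem measurableSet_Ioi] with z hz x hx
    have hz0 : 0 < z := hz
    have hx0 : 0 < x := ball_pos h hx
    have h1 : (0:ℝ) < 1 + x * z := by nlinarith
    have hlin : HasDerivAt (fun x : ℝ => 1 + x * z) z x := by
      simpa using ((hasDerivAt_id x).mul_const z).const_add 1
    have hdiv : HasDerivAt (fun x : ℝ => z / (1 + x * z))
        ((0 * (1 + x * z) - z * z) / (1 + x * z) ^ 2) x :=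
      (hasDerivAt_const x z).div hlin h1.ne'
    have : (0 * (1 + x * z) - z * z) / (1 + x * z) ^ 2 = -(z ^ 2 / (1 + x * z) ^ 2) := by
      ring
    rw [this] at hdiv
    exact hdiv.mul_const _

lemma contA : ContinuousOn wfA (Ici 0) := by
  intro x₀ hx₀
  have hb : ∀ᶠ x in nhdsWithin x₀ (Ici 0), ∀ᵐ z ∂(volume.restrict (Ioi 0)),
      ‖Real.log (1 + x * z) * Real.exp (-z)‖ ≤ (x₀ + 1) * (z * Real.exp (-z)) := by
    have h1 : ∀ᶠ x in nhdsWithin x₀ (Ici 0), x < x₀ + 1 :=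
      eventually_nhdsWithin_of_eventually_nhds ((continuous_id.tendsto x₀).eventually_lt_const (show id x₀ < x₀ + 1 by simp))
    filter_upwards [h1, eventually_mem_nhdsWithin] with x hx1 hx0
    filter_upwards [ae_restrict_mem measurableSet_Ioi] with z hz
    have hz0 : 0 < z := hz
    have hx0' : (0:ℝ) ≤ x := hx0
    have hpos : (0:ℝ) < 1 + x * z := by nlinarith
    have hlog0 : 0 ≤ Real.log (1 + x * z) := Real.log_nonneg (by nlinarith)
    have hlog : Real.log (1 + x * z) ≤ x * z := by
      have := Real.log_le_sub_one_of_pos hpos; linarith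
    rw [norm_mul, Real.norm_eq_abs, Real.norm_eq_abs, abs_of_nonneg hlog0,
      abs_of_pos (Real.exp_pos _)]
    calc Real.log (1 + x * z) * Real.exp (-z) ≤ (x * z) * Real.exp (-z) :=
          mul_le_mul_of_nonneg_right hlog (Real.exp_pos _).le
      _ ≤ (x₀ + 1) * (z * Real.exp (-z)) := by
          have : x * z ≤ (x₀ + 1) * z := by nlinarith
          nlinarith [Real.exp_pos (-z), mul_le_mul_of_nonneg_right this (Real.exp_pos (-z)).le]
  refine continuousWithinAt_of_dominated (Eventually.of_forall fun x => measA x) hb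
    (integrableOn_id_exp.const_mul (x₀ + 1)) ?_
  filter_upwards [ae_restrict_mem measurableSet_Ioi] with z hz
  have hz0 : 0 < z := hz
  have hx₀' : (0:ℝ) ≤ x₀ := hx₀
  have hpos : (0:ℝ) < 1 + x₀ * z := by nlinarith
  have h1 : ContinuousAt (fun x : ℝ => 1 + x * z) x₀ := by fun_prop
  exact ((h1.log hpos.ne').mul continuousAt_const).continuousWithinAt

lemma contB : ContinuousOn wfB (Ici 0) := by
  intro x₀ hx₀
  have hb : ∀ᶠ x in nhdsWithin x₀ (Ici 0), ∀ᵐ z ∂(volume.restrict (Ioi 0)),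
      ‖(z / (1 + x * z)) * Real.exp (-z)‖ ≤ z * Real.exp (-z) := by
    filter_upwards [eventually_mem_nhdsWithin] with x hx0
    filter_upwards [ae_restrict_mem measurableSet_Ioi] with z hz
    have hz0 : 0 < z := hz
    have hx0' : (0:ℝ) ≤ x := hx0
    have h1 : (1:ℝ) ≤ 1 + x * z := by nlinarith
    have hd : 0 ≤ z / (1 + x * z) := div_nonneg hz0.le (by linarith)
    have hdz : z / (1 + x * z) ≤ z := by rw [div_le_iff₀ (by linarith)]; nlinarith
    rw [norm_mul, Real.norm_eq_abs, Real.norm_eq_abs, abs_of_nonneg hd,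
      abs_of_pos (Real.exp_pos _)]
    exact mul_le_mul_of_nonneg_right hdz (Real.exp_pos _).le
  refine continuousWithinAt_of_dominated (Eventually.of_forall fun x => measB x) hb
    integrableOn_id_exp ?_
  filter_upwards [ae_restrict_mem measurableSet_Ioi] with z hz
  have hz0 : 0 < z := hz
  have hx₀' : (0:ℝ) ≤ x₀ := hx₀
  have hpos : (0:ℝ) < 1 + x₀ * z := by nlinarith
  have h1 : ContinuousAt (fun x : ℝ => 1 + x * z) x₀ := by fun_prop
  exact ((continuousAt_const.div h1 hpos.ne').mul continuousAt_const).continuousWithinAt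

lemma wfA_lower {x : ℝ} (hx : 0 ≤ x) : Real.log (1 + x) * Real.exp (-1) ≤ wfA x := by
  have h1 : ∫ z in Ioi (1:ℝ), Real.log (1 + x * z) * Real.exp (-z) ≤ wfA x := by
    refine setIntegral_mono_set (intA' hx) ?_ (HasSubset.Subset.eventuallyLE (by
      intro z hz; exact lt_trans one_pos (mem_Ioi.mp hz)))
    filter_upwards [ae_restrict_mem measurableSet_Ioi] with z hz
    have hz0 : 0 < z := hz
    exact mul_nonneg (Real.log_nonneg (by nlinarith)) (Real.exp_pos _).le
  have h2 : ∫ z in Ioi (1:ℝ), Real.log (1 + x) * Real.exp (-z)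
      ≤ ∫ z in Ioi (1:ℝ), Real.log (1 + x * z) * Real.exp (-z) := by
    refine setIntegral_mono_on ?_ ((intA' hx).mono_set (Ioi_subset_Ioi zero_le_one))
      measurableSet_Ioi ?_
    · have : IntegrableOn (fun z : ℝ => Real.exp (-z)) (Ioi 1) := by
        have := exp_neg_integrableOn_Ioi (1:ℝ) (b := 1) one_pos
        simpa using this
      exact this.const_mul (Real.log (1 + x))
    · intro z hz
      have hz1 : (1:ℝ) < z := hz
      have hle : 1 + x ≤ 1 + x * z := by nlinarith
      exact mul_le_mul_of_nonneg_right (Real.log_le_log (by linarith) hle) (Real.exp_pos _).le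
  have h3 : ∫ z in Ioi (1:ℝ), Real.log (1 + x) * Real.exp (-z)
      = Real.log (1 + x) * Real.exp (-1) := by
    rw [integral_const_mul, integral_exp_neg_Ioi]
  linarith
lemma wfB_upper {x : ℝ} (hx : 0 < x) : wfB x ≤ x⁻¹ := by
  have h1 : ∫ z in Ioi (0:ℝ), (z / (1 + x * z)) * Real.exp (-z)
      ≤ ∫ z in Ioi (0:ℝ), x⁻¹ * Real.exp (-z) := by
    refine setIntegral_mono_on (intB hx.le) ?_ measurableSet_Ioi ?_
    · have : IntegrableOn (fun z : ℝ => Real.exp (-z)) (Ioi 0) := by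
        have := exp_neg_integrableOn_Ioi (0:ℝ) (b := 1) one_pos
        simpa using this
      exact this.const_mul _
    · intro z hz
      have hz0 : 0 < z := hz
      have hd : z / (1 + x * z) ≤ x⁻¹ := by
        rw [div_le_iff₀ (by nlinarith)]
        rw [inv_mul_eq_div, le_div_iff₀ hx]
        nlinarith
      exact mul_le_mul_of_nonneg_right hd (Real.exp_pos _).le
  have h2 : ∫ z in Ioi (0:ℝ), x⁻¹ * Real.exp (-z) = x⁻¹ := by
    rw [integral_const_mul, integral_exp_neg_Ioi]
    simp
  rw [wfB]; linarith

lemma waterfill_tendsto : Tendsto waterfill atTop atTop := by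
  have hlow : ∀ᶠ x in atTop, x * (Real.log (1 + x) * Real.exp (-1)) - x ≤ waterfill x := by
    filter_upwards [eventually_gt_atTop (0:ℝ)] with x hx
    have hB := wfB_pos hx.le
    have hBu := wfB_upper hx
    have hA0 : 0 ≤ wfA x := le_trans (mul_nonneg (Real.log_nonneg (by linarith)) (Real.exp_pos _).le) (wfA_lower hx.le)
    have hdiv : wfA x * x ≤ wfA x / wfB x := by
      have h := div_le_div_of_nonneg_left hA0 hB hBu
      have he : wfA x / x⁻¹ = wfA x * x := by field_simp
      linarith
    have hAx : x * (Real.log (1 + x) * Real.exp (-1)) ≤ wfA x * x := by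
      rw [mul_comm]
      exact mul_le_mul_of_nonneg_right (wfA_lower hx.le) hx.le
    rw [waterfill_def]
    linarith
  refine tendsto_atTop_mono' _ hlow ?_
  have : (fun x : ℝ => x * (Real.log (1 + x) * Real.exp (-1)) - x)
      = fun x : ℝ => x * (Real.log (1 + x) * Real.exp (-1) - 1) := by
    funext x; ring
  rw [this]
  refine Tendsto.atTop_mul_atTop₀ tendsto_id ?_
  have hlog : Tendsto (fun x : ℝ => Real.log (1 + x) * Real.exp (-1)) atTop atTop :=
    Tendsto.atTop_mul_const (Real.exp_pos _)
      (Real.tendsto_log_atTop.comp (tendsto_atTop_add_const_left _ 1 tendsto_id))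
  simpa [sub_eq_add_neg] using tendsto_atTop_add_const_right atTop (-1) hlog

lemma waterfill_cont : ContinuousOn waterfill (Ici 0) :=
  ((contA.div contB fun x hx => (wfB_pos hx).ne').sub continuousOn_id)

lemma waterfill_zero : waterfill 0 = 0 := by
  have : wfA 0 = 0 := by
    rw [wfA]
    simp
  rw [waterfill_def, this]
  simp

lemma waterfill_mono : StrictMonoOn waterfill (Ici 0) := by
  refine strictMonoOn_of_deriv_pos (convex_Ici 0) waterfill_cont ?_
  rw [interior_Ici]
  intro x hx
  have hx0 : (0:ℝ) < x := hx
  have hB := wfB_pos hx0.le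
  have hD : HasDerivAt waterfill
      ((wfB x * wfB x - wfA x * wfB' x) / wfB x ^ 2 - 1) x :=
    ((hasDerivAt_wfA hx0).div (hasDerivAt_wfB hx0) hB.ne').sub (hasDerivAt_id x)
  rw [hD.deriv]
  rw [sub_pos, lt_div_iff₀ (by positivity)]
  nlinarith [wfA_pos hx0, wfB'_neg hx0.le]

lemma waterfill_nonneg {x : ℝ} (hx : 0 ≤ x) : 0 ≤ waterfill x := by
  rcases eq_or_lt_of_le hx with h | h
  · rw [← h, waterfill_zero]
  · rw [← waterfill_zero]
    exact (waterfill_mono self_mem_Ici hx h).le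

lemma waterfill_image : waterfill '' Ici 0 = Ici 0 := by
  apply Subset.antisymm
  · rintro y ⟨x, hx, rfl⟩
    exact waterfill_nonneg hx
  · intro y hy
    obtain ⟨b, hb1, hb2⟩ := ((waterfill_tendsto.eventually_ge_atTop y).and
      (eventually_ge_atTop (0:ℝ))).exists
    have hmem : y ∈ Icc (waterfill 0) (waterfill b) := by
      rw [waterfill_zero]; exact ⟨hy, hb1⟩
    have := intermediate_value_Icc hb2 (waterfill_cont.mono (Icc_subset_Ici_self))
    exact image_mono (Icc_subset_Ici_self) (this hmem)

theorem waterfill_strictMono_inverse :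
    ContinuousOn waterfill (Ici 0) ∧
    StrictMonoOn waterfill (Ici 0) ∧
    waterfill 0 = 0 ∧
    Tendsto waterfill atTop atTop ∧
    ∃ g : ℝ → ℝ, ContinuousOn g (Ici 0) ∧ StrictMonoOn g (Ici 0) ∧
      (∀ y ∈ Ici (0:ℝ), g y ∈ Ici (0:ℝ)) ∧
      (∀ x ∈ Ici (0:ℝ), g (waterfill x) = x) ∧
      (∀ y ∈ Ici (0:ℝ), waterfill (g y) = y) := by
  refine ⟨waterfill_cont, waterfill_mono, waterfill_zero, waterfill_tendsto, ?_⟩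
  let e : (Ici (0:ℝ) : Set ℝ) ≃o (Ici (0:ℝ) : Set ℝ) :=
    (waterfill_mono.orderIso waterfill _).trans (OrderIso.setCongr _ _ waterfill_image)
  have he : ∀ a : Ici (0:ℝ), (e a : ℝ) = waterfill a := fun a => rfl
  refine ⟨fun y => (e.symm ⟨max y 0, mem_Ici.mpr (le_max_right _ _)⟩ : ℝ), ?_, ?_, ?_, ?_, ?_⟩
  · refine Continuous.continuousOn ?_
    exact continuous_subtype_val.comp
      ((OrderIso.continuous e.symm).comp ((continuous_id.max continuous_const).subtype_mk _))
  · intro y1 h1 y2 h2 hlt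
    have m1 : max y1 0 = y1 := max_eq_left h1
    have m2 : max y2 0 = y2 := max_eq_left h2
    have : (⟨max y1 0, mem_Ici.mpr (le_max_right _ _)⟩ : Ici (0:ℝ)) < ⟨max y2 0, mem_Ici.mpr (le_max_right _ _)⟩ := by
      rw [Subtype.mk_lt_mk, m1, m2]; exact hlt
    exact Subtype.coe_lt_coe.mpr (e.symm.strictMono this)
  · intro y hy
    exact (e.symm ⟨max y 0, mem_Ici.mpr (le_max_right _ _)⟩).2
  · intro x hx
    have hw := waterfill_nonneg hx
    have m : max (waterfill x) 0 = waterfill x := max_eq_left hw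
    have key : (⟨max (waterfill x) 0, mem_Ici.mpr (le_max_right _ _)⟩ : Ici (0:ℝ)) = e ⟨x, hx⟩ := by
      ext
      rw [he]
      exact m
    show (e.symm ⟨max (waterfill x) 0, mem_Ici.mpr (le_max_right _ _)⟩ : ℝ) = x
    rw [key, e.symm_apply_apply]
  · intro y hy
    have m : (⟨max y 0, mem_Ici.mpr (le_max_right _ _)⟩ : Ici (0:ℝ)) = ⟨y, hy⟩ := Subtype.ext (max_eq_left hy)
    show waterfill (e.symm ⟨max y 0, mem_Ici.mpr (le_max_right _ _)⟩ : ℝ) = y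
    rw [m]
    have := he (e.symm ⟨y, hy⟩)
    rw [e.apply_symm_apply] at this
    exact this.symm
end

section
/- For every g > 0 and Z standard exponential, the function (γ, W) ↦ γ·∫₀^∞ log(1 + g·(W/γ)·z)·e^{−z} dz is jointly concave and nondecreasing in each variable on {(γ,W) : γ > 0, W ≥ 0}. -/
open Set MeasureTheory

namespace ErgCap

noncomputable def f (g x : ℝ) : ℝ :=
  ∫ z in Ioi (0:ℝ), Real.log (1 + g * x * z) * Real.exp (-z)

lemma meas (g x : ℝ) :
    AEStronglyMeasurable (fun z : ℝ => Real.log (1 + g * x * z) * Real.exp (-z))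
      (volume.restrict (Ioi 0)) := by
  apply Measurable.aestronglyMeasurable
  exact (Real.measurable_log.comp (measurable_const.add (measurable_id.const_mul _))).mul
    (Real.measurable_exp.comp measurable_neg)

lemma integrable {g x : ℝ} (hg : 0 < g) (hx : 0 ≤ x) :
    IntegrableOn (fun z : ℝ => Real.log (1 + g * x * z) * Real.exp (-z)) (Ioi 0) := by
  have hG : IntegrableOn (fun z : ℝ => Real.exp (-z) * z ^ ((2:ℝ) - 1)) (Ioi 0) :=
    Real.GammaIntegral_convergent (by norm_num)
  have hG' : IntegrableOn (fun z : ℝ => g * x * z * Real.exp (-z)) (Ioi 0) := by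
    have h2 : IntegrableOn (fun z : ℝ => g * x * (Real.exp (-z) * z ^ ((2:ℝ) - 1))) (Ioi 0) :=
      hG.const_mul (g * x)
    apply h2.congr_fun ?_ measurableSet_Ioi
    intro z hz
    norm_num [Real.rpow_one]
    ring
  apply hG'.mono' (meas g x)
  filter_upwards [ae_restrict_mem measurableSet_Ioi] with z hz
  have hz0 : (0:ℝ) < z := hz
  have h1 : (0:ℝ) ≤ g * x * z := by positivity
  have hlog0 : 0 ≤ Real.log (1 + g * x * z) := Real.log_nonneg (by linarith)
  have hlog1 : Real.log (1 + g * x * z) ≤ g * x * z := by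
    have := Real.log_le_sub_one_of_pos (show (0:ℝ) < 1 + g * x * z by linarith)
    linarith
  rw [Real.norm_eq_abs, abs_of_nonneg (by positivity)]
  exact mul_le_mul_of_nonneg_right hlog1 (Real.exp_nonneg _)

lemma f_zero (g : ℝ) : f g 0 = 0 := by
  simp [f]

lemma f_mono {g : ℝ} (hg : 0 < g) : MonotoneOn (f g) (Ici 0) := by
  intro x hx y hy hxy
  apply setIntegral_mono_on (integrable hg hx) (integrable hg hy) measurableSet_Ioi
  intro z hz
  have hz0 : (0:ℝ) < z := hz
  apply mul_le_mul_of_nonneg_right _ (Real.exp_nonneg _)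
  have hx' : (0:ℝ) ≤ x := hx
  have h1 : (0:ℝ) ≤ g * x * z := by positivity
  apply Real.log_le_log (by linarith)
  have := mul_le_mul_of_nonneg_right (mul_le_mul_of_nonneg_left hxy hg.le) hz0.le
  linarith

lemma f_concave {g : ℝ} (hg : 0 < g) : ConcaveOn ℝ (Ici 0) (f g) := by
  refine ⟨convex_Ici 0, ?_⟩
  intro x hx y hy a b ha hb hab
  have hx' : (0:ℝ) ≤ x := hx
  have hy' : (0:ℝ) ≤ y := hy
  have key : ∀ z ∈ Ioi (0:ℝ),
      a * (Real.log (1 + g * x * z) * Real.exp (-z))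
        + b * (Real.log (1 + g * y * z) * Real.exp (-z))
      ≤ Real.log (1 + g * (a * x + b * y) * z) * Real.exp (-z) := by
    intro z hz
    have hz0 : (0:ℝ) < z := hz
    have hu0 : (0:ℝ) ≤ g * x * z := by positivity
    have hv0 : (0:ℝ) ≤ g * y * z := by positivity
    have hu : (0:ℝ) < 1 + g * x * z := by linarith
    have hv : (0:ℝ) < 1 + g * y * z := by linarith
    have hlog := strictConcaveOn_log_Ioi.concaveOn.2 (mem_Ioi.2 hu) (mem_Ioi.2 hv) ha hb hab
    simp only [smul_eq_mul] at hlog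
    have heq : a * (1 + g * x * z) + b * (1 + g * y * z) = 1 + g * (a * x + b * y) * z := by
      have : a + b = 1 := hab; nlinarith [this]
    rw [heq] at hlog
    have he : (0:ℝ) ≤ Real.exp (-z) := Real.exp_nonneg _
    nlinarith [mul_le_mul_of_nonneg_right hlog he]
  have hixy : (0:ℝ) ≤ a * x + b * y := by positivity
  have hInt : IntegrableOn
      (fun z : ℝ => a * (Real.log (1 + g * x * z) * Real.exp (-z))
        + b * (Real.log (1 + g * y * z) * Real.exp (-z))) (Ioi 0) :=
    ((integrable hg hx').const_mul a).add ((integrable hg hy').const_mul b)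
  have := setIntegral_mono_on hInt (integrable hg hixy) measurableSet_Ioi key
  rw [integral_add ((integrable hg hx').const_mul a) ((integrable hg hy').const_mul b),
    integral_const_mul, integral_const_mul] at this
  simpa [f, smul_eq_mul] using this

end ErgCap

theorem ergodic_capacity_jointly_concave (g : ℝ) (hg : 0 < g) :
    ConcaveOn ℝ {p : ℝ × ℝ | 0 < p.1 ∧ 0 ≤ p.2}
      (fun p : ℝ × ℝ =>
        p.1 * ∫ z in Ioi (0:ℝ), Real.log (1 + g * (p.2 / p.1) * z) * Real.exp (-z)) ∧
    (∀ W : ℝ, 0 ≤ W → MonotoneOn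
      (fun γ : ℝ => γ * ∫ z in Ioi (0:ℝ), Real.log (1 + g * (W / γ) * z) * Real.exp (-z))
      (Ioi 0)) ∧
    (∀ γ : ℝ, 0 < γ → MonotoneOn
      (fun W : ℝ => γ * ∫ z in Ioi (0:ℝ), Real.log (1 + g * (W / γ) * z) * Real.exp (-z))
      (Ici 0)) := by
  have hfc := ErgCap.f_concave hg
  have hfm := ErgCap.f_mono hg
  refine ⟨?_, ?_, ?_⟩
  · -- perspective concavity
    constructor
    · rintro p ⟨hp1, hp2⟩ q ⟨hq1, hq2⟩ a b ha hb hab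
      constructor
      · simp only [Prod.fst_add, Prod.smul_fst, smul_eq_mul]
        rcases ha.lt_or_eq with h | h
        · have : 0 ≤ b * q.1 := mul_nonneg hb hq1.le
          nlinarith
        · have hb1 : b = 1 := by linarith
          simp [← h, hb1, hq1]
      · simp only [Prod.snd_add, Prod.smul_snd, smul_eq_mul]
        positivity
    · rintro p ⟨hp1, hp2⟩ q ⟨hq1, hq2⟩ a b ha hb hab
      simp only [Prod.fst_add, Prod.snd_add, Prod.smul_fst, Prod.smul_snd, smul_eq_mul]
      set γ : ℝ := a * p.1 + b * q.1 with hγdef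
      have hγ : 0 < γ := by
        rcases ha.lt_or_eq with h | h
        · nlinarith [mul_nonneg hb hq1.le]
        · have hb1 : b = 1 := by linarith
          simp [hγdef, ← h, hb1]; exact hq1
      have hc : 0 ≤ a * p.1 / γ := by positivity
      have hd : 0 ≤ b * q.1 / γ := by positivity
      have hcd : a * p.1 / γ + b * q.1 / γ = 1 := by field_simp; exact hγdef.symm
      have hkey := hfc.2 (mem_Ici.2 (div_nonneg hp2 hp1.le))
        (mem_Ici.2 (div_nonneg hq2 hq1.le)) hc hd hcd
      simp only [smul_eq_mul] at hkey
      have harg : a * p.1 / γ * (p.2 / p.1) + b * q.1 / γ * (q.2 / q.1)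
          = (a * p.2 + b * q.2) / γ := by
        field_simp
      rw [harg] at hkey
      have := mul_le_mul_of_nonneg_left hkey hγ.le
      calc a * (p.1 * ErgCap.f g (p.2 / p.1)) + b * (q.1 * ErgCap.f g (q.2 / q.1))
          = γ * (a * p.1 / γ * ErgCap.f g (p.2 / p.1) + b * q.1 / γ * ErgCap.f g (q.2 / q.1)) := by
            field_simp
        _ ≤ γ * ErgCap.f g ((a * p.2 + b * q.2) / γ) := this
  · -- monotone in γ
    intro W hW γ₁ hγ₁ γ₂ hγ₂ h12
    have hγ₁ : (0:ℝ) < γ₁ := hγ₁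
    have hγ₂ : (0:ℝ) < γ₂ := hγ₂
    have ht0 : 0 ≤ γ₁ / γ₂ := by positivity
    have ht1 : 0 ≤ 1 - γ₁ / γ₂ := by
      have : γ₁ / γ₂ ≤ 1 := (div_le_one hγ₂).2 h12
      linarith
    have hkey := hfc.2 (mem_Ici.2 (div_nonneg hW hγ₁.le)) (mem_Ici.2 le_rfl)
      ht0 ht1 (by ring)
    simp only [smul_eq_mul, mul_zero, add_zero, ErgCap.f_zero] at hkey
    have harg : γ₁ / γ₂ * (W / γ₁) = W / γ₂ := by field_simp
    rw [harg] at hkey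
    have := mul_le_mul_of_nonneg_left hkey hγ₂.le
    calc γ₁ * ErgCap.f g (W / γ₁) = γ₂ * (γ₁ / γ₂ * ErgCap.f g (W / γ₁)) := by
          field_simp
      _ ≤ γ₂ * ErgCap.f g (W / γ₂) := this
  · -- monotone in W
    intro γ hγ W₁ hW₁ W₂ hW₂ h12
    have hγ : (0:ℝ) < γ := hγ
    exact mul_le_mul_of_nonneg_left
      (hfm (mem_Ici.2 (div_nonneg hW₁ hγ.le)) (mem_Ici.2 (div_nonneg hW₂ hγ.le))
        (by gcongr)) hγ.le
end

section
/- For every g > 0 and R > 0, the function P ↦ R·P / ∫₀^∞ log(1+g·P·z)·e^{−z} dz is strictly increasing on (0,∞). -/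
open Set MeasureTheory

private lemma integrable_aux (a : ℝ) (ha : 0 < a) :
    IntegrableOn (fun z => Real.log (1 + a * z) * Real.exp (-z)) (Ioi (0:ℝ)) := by
  have hG : IntegrableOn (fun x : ℝ => Real.exp (-x) * x ^ ((2:ℝ) - 1)) (Ioi 0) :=
    Real.GammaIntegral_convergent (by norm_num)
  have hG' : IntegrableOn (fun x : ℝ => a * (Real.exp (-x) * x)) (Ioi 0) := by
    have : IntegrableOn (fun x : ℝ => Real.exp (-x) * x) (Ioi 0) := by
      refine hG.congr_fun (fun x hx => ?_) measurableSet_Ioi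
      norm_num [Real.rpow_one]
    exact this.const_mul a
  refine Integrable.mono hG' ?_ ?_
  · refine ((Real.measurable_log.comp
      (measurable_const.add ((measurable_id.const_mul a)))).mul
      (Real.measurable_exp.comp measurable_neg)).aestronglyMeasurable
  · rw [ae_restrict_iff' measurableSet_Ioi]
    filter_upwards with z hz
    have hz0 : 0 < z := hz
    have h1 : (1:ℝ) ≤ 1 + a * z := by nlinarith
    have hlog0 : 0 ≤ Real.log (1 + a * z) := Real.log_nonneg h1
    have hlog : Real.log (1 + a * z) ≤ a * z := by
      have := Real.log_le_sub_one_of_pos (by linarith : (0:ℝ) < 1 + a * z)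
      linarith
    have hexp : 0 < Real.exp (-z) := Real.exp_pos _
    rw [Real.norm_eq_abs, Real.norm_eq_abs, abs_of_nonneg (by positivity),
      abs_of_nonneg (by positivity)]
    calc Real.log (1 + a * z) * Real.exp (-z) ≤ (a * z) * Real.exp (-z) := by
          exact mul_le_mul_of_nonneg_right hlog hexp.le
      _ = a * (Real.exp (-z) * z) := by ring

private lemma pos_aux {f : ℝ → ℝ} (hi : IntegrableOn f (Ioi (0:ℝ)))
    (hpos : ∀ z ∈ Ioi (0:ℝ), 0 < f z) : 0 < ∫ z in Ioi (0:ℝ), f z := by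
  rw [setIntegral_pos_iff_support_of_nonneg_ae ?_ hi]
  · have hsub : Ioi (0:ℝ) ⊆ Function.support f ∩ Ioi 0 :=
      fun z hz => ⟨(hpos z hz).ne', hz⟩
    refine lt_of_lt_of_le ?_ (measure_mono hsub)
    simp [Real.volume_Ioi]
  · rw [Filter.EventuallyLE, ae_restrict_iff' measurableSet_Ioi]
    filter_upwards with z hz using (hpos z hz).le

private lemma int_pos (a : ℝ) (ha : 0 < a) :
    0 < ∫ z in Ioi (0:ℝ), Real.log (1 + a * z) * Real.exp (-z) := by
  refine pos_aux (integrable_aux a ha) (fun z hz => ?_)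
  have hz0 : (0:ℝ) < z := hz
  have h1 : (1:ℝ) < 1 + a * z := by nlinarith
  exact mul_pos (Real.log_pos h1) (Real.exp_pos _)

private lemma pointwise_aux {c P₁ P₂ : ℝ} (hc : 0 < c) (h1 : 0 < P₁) (h12 : P₁ < P₂) :
    P₁ * Real.log (1 + c * P₂) < P₂ * Real.log (1 + c * P₁) := by
  have hP2 : 0 < P₂ := h1.trans h12
  have hb : (0:ℝ) < P₁ / P₂ := by positivity
  have hab : (1 - P₁ / P₂) + P₁ / P₂ = 1 := by ring
  have ha : (0:ℝ) < 1 - P₁ / P₂ := by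
    have : P₁ / P₂ < 1 := (div_lt_one hP2).mpr h12
    linarith
  have hx : (1:ℝ) ∈ Ioi (0:ℝ) := by norm_num
  have hy : (1 + c * P₂) ∈ Ioi (0:ℝ) := by
    simp only [mem_Ioi]; nlinarith
  have hne : (1:ℝ) ≠ 1 + c * P₂ := by nlinarith
  have key := strictConcaveOn_log_Ioi.2 hx hy hne ha hb hab
  have heq : (1 - P₁ / P₂) • (1:ℝ) + (P₁ / P₂) • (1 + c * P₂) = 1 + c * P₁ := by
    field_simp
    rw [smul_eq_mul, smul_eq_mul, mul_one, div_mul_eq_mul_div, ← add_div, div_eq_iff hP2.ne']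
    ring
  rw [heq, smul_eq_mul, smul_eq_mul, Real.log_one, mul_zero, zero_add] at key
  have h' := mul_lt_mul_of_pos_left key hP2
  have e : P₂ * (P₁ / P₂ * Real.log (1 + c * P₂)) = P₁ * Real.log (1 + c * P₂) := by
    field_simp
  rw [e] at h'
  exact h'

theorem power_strictMono (g R : ℝ) (hg : 0 < g) (hR : 0 < R) :
    StrictMonoOn
      (fun P : ℝ => R * P / ∫ z in Ioi (0:ℝ), Real.log (1 + g * P * z) * Real.exp (-z))
      (Ioi 0) := by
  intro P₁ hP₁ P₂ hP₂ h12
  have hP₁' : (0:ℝ) < P₁ := hP₁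
  have hP₂' : (0:ℝ) < P₂ := hP₂
  have hgP₁ : 0 < g * P₁ := by positivity
  have hgP₂ : 0 < g * P₂ := by positivity
  set I₁ := ∫ z in Ioi (0:ℝ), Real.log (1 + g * P₁ * z) * Real.exp (-z) with hI₁
  set I₂ := ∫ z in Ioi (0:ℝ), Real.log (1 + g * P₂ * z) * Real.exp (-z) with hI₂
  have hI₁pos : 0 < I₁ := int_pos _ hgP₁
  have hI₂pos : 0 < I₂ := int_pos _ hgP₂
  have hint₁ := integrable_aux _ hgP₁
  have hint₂ := integrable_aux _ hgP₂
  -- strict inequality of integrals: P₁ * I₂ < P₂ * I₁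
  have hdiff : 0 < ∫ z in Ioi (0:ℝ),
      (P₂ * (Real.log (1 + g * P₁ * z) * Real.exp (-z))
        - P₁ * (Real.log (1 + g * P₂ * z) * Real.exp (-z))) := by
    refine pos_aux ((hint₁.const_mul P₂).sub (hint₂.const_mul P₁)) (fun z hz => ?_)
    have hz0 : (0:ℝ) < z := hz
    have hc : 0 < g * z := by positivity
    have hpt : P₁ * Real.log (1 + (g * z) * P₂) < P₂ * Real.log (1 + (g * z) * P₁) :=
      pointwise_aux hc hP₁' h12
    have hexp : 0 < Real.exp (-z) := Real.exp_pos _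
    have h1 : P₁ * Real.log (1 + g * P₂ * z) < P₂ * Real.log (1 + g * P₁ * z) := by
      have e1 : 1 + (g * z) * P₂ = 1 + g * P₂ * z := by ring
      have e2 : 1 + (g * z) * P₁ = 1 + g * P₁ * z := by ring
      rwa [e1, e2] at hpt
    nlinarith
  have hsub : (∫ z in Ioi (0:ℝ),
      (P₂ * (Real.log (1 + g * P₁ * z) * Real.exp (-z))
        - P₁ * (Real.log (1 + g * P₂ * z) * Real.exp (-z))))
      = P₂ * I₁ - P₁ * I₂ := by
    rw [integral_sub (hint₁.const_mul P₂) (hint₂.const_mul P₁),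
      integral_const_mul, integral_const_mul]
  rw [hsub] at hdiff
  have hkey : P₁ * I₂ < P₂ * I₁ := by linarith
  simp only
  rw [div_lt_div_iff₀ hI₁pos hI₂pos]
  nlinarith
end
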